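/- Let a_n be the number of partitions of [n] avoiding the generalized pattern 12|3. Then a_0 = a_1 = 1 and for n ≥ 2, a_n = a_{n−1} + 1 + Σ_{k=1}^{n−2} C(n−2, k) a_{n−k−2}. -/

import Mathlib

open Finset

structure SetPartition (n : ℕ) where
  blocks : Finset (Finset ℕ)
  nonempty_mem : ∀ B ∈ blocks, B.Nonempty
  disj : ∀ B ∈ blocks, ∀ C ∈ blocks, B ≠ C → Disjoint B C
  cover : blocks.sup id = Finset.Icc 1 n

/-- `σ` contains the pattern `π`: there is an order-preserving choice of elements
and an injective assignment of blocks of `π` to distinct blocks of `σ`. -/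
def SetPartition.Contains {n k : ℕ} (σ : SetPartition n) (π : SetPartition k) : Prop :=
  ∃ f : ℕ → ℕ, StrictMonoOn f (Finset.Icc 1 k : Set ℕ) ∧
    ∃ g : Finset ℕ → Finset ℕ,
      (∀ B ∈ π.blocks, g B ∈ σ.blocks) ∧
      (∀ B ∈ π.blocks, ∀ C ∈ π.blocks, g B = g C → B = C) ∧
      (∀ B ∈ π.blocks, ∀ x ∈ B, f x ∈ g B)

def SetPartition.Avoids {n k : ℕ} (σ : SetPartition n) (π : SetPartition k) : Prop :=
  ¬ σ.Contains π

def pat1_2_3 : SetPartition 3 := ⟨{{1}, {2}, {3}}, by decide, by decide, by decide⟩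
def pat1_23 : SetPartition 3 := ⟨{{1}, {2, 3}}, by decide, by decide, by decide⟩
def pat12_3 : SetPartition 3 := ⟨{{1, 2}, {3}}, by decide, by decide, by decide⟩
def pat13_2 : SetPartition 3 := ⟨{{1, 3}, {2}}, by decide, by decide, by decide⟩
def pat123 : SetPartition 3 := ⟨{{1, 2, 3}}, by decide, by decide, by decide⟩

/-- `B` and `C` are consecutive blocks of `σ` in the canonical order by minima,
with `B` immediately preceding `C`. -/
def SetPartition.AdjacentBlocks {n : ℕ} (σ : SetPartition n) (B C : Finset ℕ) : Prop :=
  B ∈ σ.blocks ∧ C ∈ σ.blocks ∧ B.min < C.min ∧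
    ∀ D ∈ σ.blocks, ¬ (B.min < D.min ∧ D.min < C.min)

/-- `σ` contains the generalized pattern `12|3`: a copy of `12/3` whose two blocks
occupy adjacent blocks of `σ` (in either order). -/
def SetPartition.Contains12Bar3 {n : ℕ} (σ : SetPartition n) : Prop :=
  ∃ B C : Finset ℕ, (σ.AdjacentBlocks B C ∨ σ.AdjacentBlocks C B) ∧
    ∃ a ∈ B, ∃ b ∈ B, ∃ c ∈ C, a < b ∧ b < c

/-- The number of partitions of `[n]` avoiding the generalized pattern `12|3`. -/
noncomputable def a (n : ℕ) : ℕ :=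
  ({σ : SetPartition n | ¬ σ.Contains12Bar3}).ncard

-- general ground set versions
def IsPtn (S : Finset ℕ) (P : Finset (Finset ℕ)) : Prop :=
  (∀ B ∈ P, B.Nonempty) ∧ (∀ B ∈ P, ∀ C ∈ P, B ≠ C → Disjoint B C) ∧ P.sup id = S

def Adj (P : Finset (Finset ℕ)) (B C : Finset ℕ) : Prop :=
  B ∈ P ∧ C ∈ P ∧ B.min < C.min ∧ ∀ D ∈ P, ¬ (B.min < D.min ∧ D.min < C.min)

def Cont3 (P : Finset (Finset ℕ)) : Prop :=
  ∃ B C : Finset ℕ, (Adj P B C ∨ Adj P C B) ∧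
    ∃ a ∈ B, ∃ b ∈ B, ∃ c ∈ C, a < b ∧ b < c

lemma contains_iff_cont {n : ℕ} (σ : SetPartition n) :
    σ.Contains12Bar3 ↔ Cont3 σ.blocks := Iff.rfl

open scoped Classical in
noncomputable def AP (S : Finset ℕ) : Finset (Finset (Finset ℕ)) :=
  S.powerset.powerset.filter (fun P => IsPtn S P ∧ ¬ Cont3 P)

lemma subset_of_isPtn {S P} (h : IsPtn S P) {B} (hB : B ∈ P) : B ⊆ S := by
  have := Finset.le_sup (f := id) hB
  rw [h.2.2] at this; exact this

lemma mem_AP {S : Finset ℕ} {P : Finset (Finset ℕ)} :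
    P ∈ AP S ↔ IsPtn S P ∧ ¬ Cont3 P := by
  classical
  rw [AP]
  rw [Finset.mem_filter, Finset.mem_powerset]
  constructor
  · exact fun h => h.2
  · intro h
    refine ⟨fun B hB => ?_, h⟩
    rw [Finset.mem_powerset]
    exact subset_of_isPtn h.1 hB

lemma a_eq (n : ℕ) : a n = (AP (Finset.Icc 1 n)).card := by
  rw [a, ← Set.ncard_coe_finset]
  have hbij : Set.BijOn SetPartition.blocks {σ : SetPartition n | ¬ σ.Contains12Bar3}
      ↑(AP (Finset.Icc 1 n)) := by
    refine ⟨?_, ?_, ?_⟩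
    · intro σ hσ
      simp only [Set.mem_setOf_eq] at hσ
      show σ.blocks ∈ (AP (Finset.Icc 1 n) : Finset _)
      rw [mem_AP]
      exact ⟨⟨σ.nonempty_mem, σ.disj, σ.cover⟩, hσ⟩
    · intro σ _ τ _ h
      cases σ; cases τ; simpa using h
    · intro P hP
      rw [Finset.mem_coe, mem_AP] at hP
      exact ⟨⟨P, hP.1.1, hP.1.2.1, hP.1.2.2⟩, hP.2, rfl⟩
  rw [← hbij.image_eq, Set.ncard_image_of_injOn hbij.injOn]

lemma not_cont3_singleton (X : Finset ℕ) : ¬ Cont3 {X} := by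
  rintro ⟨B, C, hadj, -⟩
  rcases hadj with h | h
  all_goals {
    obtain ⟨hB, hC, hlt, -⟩ := h
    rw [Finset.mem_singleton] at hB hC
    subst hB; subst hC
    exact lt_irrefl _ hlt }

lemma not_cont3_empty : ¬ Cont3 (∅ : Finset (Finset ℕ)) := by
  rintro ⟨B, C, hadj, -⟩
  rcases hadj with h | h <;> exact absurd h.1 (Finset.notMem_empty _)

lemma a_zero : a 0 = 1 := by
  rw [a_eq]
  have : AP (Finset.Icc 1 0) = {∅} := by
    ext P
    rw [mem_AP, Finset.mem_singleton]
    constructor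
    · rintro ⟨⟨hne, -, hsup⟩, -⟩
      rw [Finset.Icc_eq_empty (by norm_num)] at hsup
      by_contra h
      obtain ⟨B, hB⟩ := Finset.nonempty_iff_ne_empty.2 h
      obtain ⟨x, hx⟩ := hne B hB
      have : x ∈ P.sup id := Finset.mem_sup.2 ⟨B, hB, hx⟩
      rw [hsup] at this
      exact Finset.notMem_empty _ this
    · rintro rfl
      refine ⟨⟨by simp, by simp, ?_⟩, not_cont3_empty⟩
      simp [Finset.Icc_eq_empty (by norm_num : ¬ (1:ℕ) ≤ 0)]
  rw [this, Finset.card_singleton]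

lemma a_one : a 1 = 1 := by
  rw [a_eq]
  have : AP (Finset.Icc 1 1) = {{{1}}} := by
    ext P
    rw [mem_AP, Finset.mem_singleton]
    constructor
    · rintro ⟨⟨hne, -, hsup⟩, -⟩
      have h11 : Finset.Icc 1 1 = ({1} : Finset ℕ) := by decide
      rw [h11] at hsup
      have hB : ∀ B ∈ P, B = ({1} : Finset ℕ) := by
        intro B hB
        have hsub : B ⊆ {1} := by
          have := Finset.le_sup (f := id) hB; rw [hsup] at this; exact this
        obtain ⟨x, hx⟩ := hne B hB
        have hx1 : x = 1 := Finset.mem_singleton.1 (hsub hx)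
        apply Finset.Subset.antisymm hsub
        intro y hy; rw [Finset.mem_singleton] at hy; subst hy; rwa [← hx1]
      have h1 : (1:ℕ) ∈ P.sup id := by rw [hsup]; simp
      obtain ⟨B, hBP, -⟩ := Finset.mem_sup.1 h1
      ext C
      rw [Finset.mem_singleton]
      constructor
      · intro hC; exact hB C hC
      · rintro rfl; rw [← hB B hBP]; exact hBP
    · rintro rfl
      refine ⟨⟨by simp, ?_, by decide⟩, not_cont3_singleton _⟩
      intro B hB C hC hne
      rw [Finset.mem_singleton] at hB hC
      exact absurd (hB.trans hC.symm) hne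
  rw [this, Finset.card_singleton]

section Transport
variable {e : ℕ → ℕ} {S : Finset ℕ}

lemma min'_image (he : StrictMonoOn e ↑S) {B : Finset ℕ} (hB : B.Nonempty) (hBS : B ⊆ S)
    (hB' : (B.image e).Nonempty) : (B.image e).min' hB' = e (B.min' hB) := by
  apply le_antisymm
  · exact Finset.min'_le _ _ (Finset.mem_image_of_mem e (Finset.min'_mem B hB))
  · apply Finset.le_min'
    intro y hy
    obtain ⟨x, hx, rfl⟩ := Finset.mem_image.1 hy
    exact he.monotoneOn (hBS (Finset.min'_mem B hB)) (hBS hx) (Finset.min'_le B x hx)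

lemma min_image (he : StrictMonoOn e ↑S) {B : Finset ℕ} (hB : B.Nonempty) (hBS : B ⊆ S) :
    (B.image e).min = (e (B.min' hB) : WithBot ℕ) := by
  have hB' : (B.image e).Nonempty := hB.image e
  rw [← Finset.coe_min' hB', min'_image he hB hBS hB']
  rfl

lemma image_inj_on_blocks (he : StrictMonoOn e ↑S) {B C : Finset ℕ}
    (hBS : B ⊆ S) (hCS : C ⊆ S) (h : B.image e = C.image e) : B = C := by
  ext x
  constructor
  · intro hx
    have : e x ∈ C.image e := h ▸ Finset.mem_image_of_mem e hx
    obtain ⟨y, hy, hxy⟩ := Finset.mem_image.1 this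
    rwa [he.injOn (hCS hy) (hBS hx) hxy] at hy
  · intro hx
    have : e x ∈ B.image e := h ▸ Finset.mem_image_of_mem e hx
    obtain ⟨y, hy, hxy⟩ := Finset.mem_image.1 this
    rwa [he.injOn (hBS hy) (hCS hx) hxy] at hy

lemma isPtn_image (he : StrictMonoOn e ↑S) {P : Finset (Finset ℕ)} (hP : IsPtn S P) :
    IsPtn (S.image e) (P.image (Finset.image e)) := by
  obtain ⟨hne, hdisj, hsup⟩ := hP
  refine ⟨?_, ?_, ?_⟩
  · intro B hB
    obtain ⟨B0, hB0, rfl⟩ := Finset.mem_image.1 hB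
    exact (hne B0 hB0).image e
  · intro B hB C hC hBC
    obtain ⟨B0, hB0, rfl⟩ := Finset.mem_image.1 hB
    obtain ⟨C0, hC0, rfl⟩ := Finset.mem_image.1 hC
    have hB0S := subset_of_isPtn ⟨hne, hdisj, hsup⟩ hB0
    have hC0S := subset_of_isPtn ⟨hne, hdisj, hsup⟩ hC0
    have hne0 : B0 ≠ C0 := fun h => hBC (by rw [h])
    have hd := hdisj B0 hB0 C0 hC0 hne0
    rw [Finset.disjoint_left] at hd ⊢
    intro x hx hx'
    obtain ⟨y, hy, rfl⟩ := Finset.mem_image.1 hx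
    obtain ⟨z, hz, hzy⟩ := Finset.mem_image.1 hx'
    rw [he.injOn (hC0S hz) (hB0S hy) hzy] at hz
    exact hd hy hz
  · ext x
    rw [Finset.mem_sup]
    constructor
    · rintro ⟨B, hB, hx⟩
      obtain ⟨B0, hB0, rfl⟩ := Finset.mem_image.1 hB
      obtain ⟨y, hy, rfl⟩ := Finset.mem_image.1 hx
      exact Finset.mem_image.2 ⟨y, by rw [← hsup]; exact Finset.mem_sup.2 ⟨B0, hB0, hy⟩, rfl⟩
    · intro hx
      obtain ⟨y, hy, rfl⟩ := Finset.mem_image.1 hx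
      rw [← hsup] at hy
      obtain ⟨B0, hB0, hy0⟩ := Finset.mem_sup.1 hy
      exact ⟨B0.image e, Finset.mem_image_of_mem _ hB0, Finset.mem_image_of_mem e hy0⟩

lemma cont3_image (he : StrictMonoOn e ↑S) {P : Finset (Finset ℕ)} (hP : IsPtn S P)
    (h : Cont3 P) : Cont3 (P.image (Finset.image e)) := by
  obtain ⟨B, C, hadj, a, ha, b, hb, c, hc, hab, hbc⟩ := h
  have key : ∀ B C : Finset ℕ, Adj P B C → Adj (P.image (Finset.image e)) (B.image e) (C.image e) := by
    intro B C ⟨hBP, hCP, hlt, hbetw⟩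
    have hBS := subset_of_isPtn hP hBP
    have hCS := subset_of_isPtn hP hCP
    have hBne := hP.1 B hBP
    have hCne := hP.1 C hCP
    refine ⟨Finset.mem_image_of_mem _ hBP, Finset.mem_image_of_mem _ hCP, ?_, ?_⟩
    · rw [min_image he hBne hBS, min_image he hCne hCS]
      rw [← Finset.coe_min' hBne, ← Finset.coe_min' hCne] at hlt
      exact WithTop.coe_lt_coe.2 (he (hBS (Finset.min'_mem B hBne)) (hCS (Finset.min'_mem C hCne))
        (by exact_mod_cast hlt))
    · rintro D' hD' ⟨h1, h2⟩
      obtain ⟨D, hDP, rfl⟩ := Finset.mem_image.1 hD'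
      have hDS := subset_of_isPtn hP hDP
      have hDne := hP.1 D hDP
      rw [min_image he hBne hBS, min_image he hDne hDS] at h1
      rw [min_image he hDne hDS, min_image he hCne hCS] at h2
      have h1' : e (B.min' hBne) < e (D.min' hDne) := WithTop.coe_lt_coe.1 h1
      have h2' : e (D.min' hDne) < e (C.min' hCne) := WithTop.coe_lt_coe.1 h2
      have r1 : B.min' hBne < D.min' hDne := by
        by_contra hcon
        exact absurd (he.monotoneOn (hDS (Finset.min'_mem D hDne))
          (hBS (Finset.min'_mem B hBne)) (not_lt.1 hcon)) (not_le.2 h1')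
      have r2 : D.min' hDne < C.min' hCne := by
        by_contra hcon
        exact absurd (he.monotoneOn (hCS (Finset.min'_mem C hCne))
          (hDS (Finset.min'_mem D hDne)) (not_lt.1 hcon)) (not_le.2 h2')
      apply hbetw D hDP
      rw [← Finset.coe_min' hBne, ← Finset.coe_min' hDne, ← Finset.coe_min' hCne]
      exact ⟨by exact_mod_cast r1, by exact_mod_cast r2⟩
  -- get memberships of B, C in P from adjacency
  have hBP : B ∈ P := by rcases hadj with h | h; exacts [h.1, h.2.1]
  have hCP : C ∈ P := by rcases hadj with h | h; exacts [h.2.1, h.1]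
  have hBS := subset_of_isPtn hP hBP
  have hCS := subset_of_isPtn hP hCP
  refine ⟨B.image e, C.image e, ?_, e a, Finset.mem_image_of_mem e ha,
    e b, Finset.mem_image_of_mem e hb, e c, Finset.mem_image_of_mem e hc,
    he (hBS ha) (hBS hb) hab, he (hBS hb) (hCS hc) hbc⟩
  rcases hadj with h | h
  · exact Or.inl (key B C h)
  · exact Or.inr (key C B h)

end Transport

lemma image_image_cancel {S : Finset ℕ} {e e' : ℕ → ℕ} (hinv : ∀ x ∈ S, e' (e x) = x)
    {P : Finset (Finset ℕ)} (hP : ∀ B ∈ P, B ⊆ S) :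
    (P.image (Finset.image e)).image (Finset.image e') = P := by
  have hback : ∀ B ∈ P, (B.image e).image e' = B := by
    intro B hB
    have hBS := hP B hB
    ext x
    simp only [Finset.mem_image]
    constructor
    · rintro ⟨y, ⟨z, hz, rfl⟩, rfl⟩
      rw [hinv z (hBS hz)]; exact hz
    · intro hx
      exact ⟨e x, ⟨x, hx, rfl⟩, hinv x (hBS hx)⟩
  ext B
  simp only [Finset.mem_image]
  constructor
  · rintro ⟨B1, ⟨B0, hB0, rfl⟩, rfl⟩
    rw [hback B0 hB0]; exact hB0
  · intro hB
    exact ⟨B.image e, ⟨B, hB, rfl⟩, hback B hB⟩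

lemma AP_card_congr {S T : Finset ℕ} (e : ℕ → ℕ) (he : StrictMonoOn e ↑S)
    (him : S.image e = T) : (AP S).card = (AP T).card := by
  classical
  set e' : ℕ → ℕ := Function.invFunOn e ↑S with he'def
  have hinv1 : ∀ x ∈ S, e' (e x) = x := by
    intro x hx
    have hx' : ∃ a ∈ (↑S : Set ℕ), e a = e x := ⟨x, Finset.mem_coe.2 hx, rfl⟩
    exact he.injOn (Function.invFunOn_mem hx') hx (Function.invFunOn_eq hx')
  have hmemS : ∀ y ∈ T, e' y ∈ S := by
    intro y hy
    rw [← him] at hy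
    obtain ⟨x, hx, rfl⟩ := Finset.mem_image.1 hy
    have hx' : ∃ a ∈ (↑S : Set ℕ), e a = e x := ⟨x, Finset.mem_coe.2 hx, rfl⟩
    exact Function.invFunOn_mem hx'
  have hinv2 : ∀ y ∈ T, e (e' y) = y := by
    intro y hy
    rw [← him] at hy
    obtain ⟨x, hx, rfl⟩ := Finset.mem_image.1 hy
    have hx' : ∃ a ∈ (↑S : Set ℕ), e a = e x := ⟨x, Finset.mem_coe.2 hx, rfl⟩
    exact Function.invFunOn_eq hx'
  have he' : StrictMonoOn e' ↑T := by
    intro y1 hy1 y2 hy2 hlt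
    by_contra hcon
    have : e (e' y2) ≤ e (e' y1) :=
      he.monotoneOn (hmemS y2 hy2) (hmemS y1 hy1) (not_lt.1 hcon)
    rw [hinv2 y1 hy1, hinv2 y2 hy2] at this
    exact absurd hlt (not_lt.2 this)
  have him' : T.image e' = S := by
    apply Finset.Subset.antisymm
    · intro x hx
      obtain ⟨y, hy, rfl⟩ := Finset.mem_image.1 hx
      exact hmemS y hy
    · intro x hx
      refine Finset.mem_image.2 ⟨e x, ?_, hinv1 x hx⟩
      rw [← him]; exact Finset.mem_image_of_mem e hx
  have key : ∀ (S T : Finset ℕ) (e e' : ℕ → ℕ), StrictMonoOn e ↑S → S.image e = T →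
      StrictMonoOn e' ↑T → (∀ x ∈ S, e' (e x) = x) →
      ∀ P ∈ AP S, P.image (Finset.image e) ∈ AP T := by
    clear hinv1 hinv2 hmemS him him' he he' he'def
    intro S T e e' he him he' hinv1 P hP
    rw [mem_AP] at hP ⊢
    obtain ⟨hptn, hnc⟩ := hP
    have h1 : IsPtn T (P.image (Finset.image e)) := him ▸ isPtn_image he hptn
    refine ⟨h1, fun hc => hnc ?_⟩
    have h2 := cont3_image he' h1 hc
    rwa [image_image_cancel hinv1 (fun B hB => subset_of_isPtn hptn hB)] at h2
  apply Finset.card_bij' (fun P _ => P.image (Finset.image e))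
    (fun P _ => P.image (Finset.image e'))
  · intro P hP
    rw [mem_AP] at hP
    exact image_image_cancel hinv1 (fun B hB => subset_of_isPtn hP.1 hB)
  · intro P hP
    rw [mem_AP] at hP
    exact image_image_cancel hinv2 (fun B hB => subset_of_isPtn hP.1 hB)
  · intro P hP
    exact key S T e e' he him he' hinv1 P hP
  · intro P hP
    exact key T S e' e he' him' he hinv2 P hP

lemma AP_card (S : Finset ℕ) : (AP S).card = a S.card := by
  classical
  rw [a_eq]
  set m := S.card with hm
  have hcard : S.card = m := rfl
  set iso := S.orderIsoOfFin hcard.symm.symm with hiso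
  set e : ℕ → ℕ := fun i => if h : i - 1 < m then (iso ⟨i - 1, h⟩ : ℕ) else 0 with he
  have hval : ∀ i (hi : i ∈ Finset.Icc 1 m), e i = (iso ⟨i - 1, by
      rw [Finset.mem_Icc] at hi; omega⟩ : ℕ) := by
    intro i hi
    rw [Finset.mem_Icc] at hi
    rw [he]
    simp only
    rw [dif_pos]
  have hmono : StrictMonoOn e ↑(Finset.Icc 1 m) := by
    intro i hi j hj hij
    rw [Finset.mem_coe] at hi hj
    rw [hval i hi, hval j hj]
    have hi' := Finset.mem_Icc.1 hi
    have hj' := Finset.mem_Icc.1 hj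
    have h1 : i - 1 < m := by omega
    have h2 : j - 1 < m := by omega
    have : (⟨i - 1, h1⟩ : Fin m) < ⟨j - 1, h2⟩ := by
      rw [Fin.mk_lt_mk]; omega
    exact_mod_cast iso.strictMono this
  have him : (Finset.Icc 1 m).image e = S := by
    apply Finset.eq_of_subset_of_card_le
    · intro x hx
      obtain ⟨i, hi, rfl⟩ := Finset.mem_image.1 hx
      rw [hval i hi]
      exact (iso _).2
    · rw [Finset.card_image_of_injOn (fun x hx y hy hxy =>
        hmono.injOn (Finset.mem_coe.2 hx) (Finset.mem_coe.2 hy) hxy)]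
      rw [Nat.card_Icc]
      omega
  exact (AP_card_congr e hmono him).symm

def Pat (B C : Finset ℕ) : Prop := ∃ a ∈ B, ∃ b ∈ B, ∃ c ∈ C, a < b ∧ b < c

lemma cont3_def {P : Finset (Finset ℕ)} :
    Cont3 P ↔ ∃ B C, (Adj P B C ∨ Adj P C B) ∧ Pat B C := Iff.rfl

lemma adj_erase_of_adj {P : Finset (Finset ℕ)} {B0 B C : Finset ℕ}
    (h : Adj P B C) (hB : B ≠ B0) (hC : C ≠ B0) : Adj (P.erase B0) B C := by
  obtain ⟨h1, h2, h3, h4⟩ := h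
  exact ⟨Finset.mem_erase.2 ⟨hB, h1⟩, Finset.mem_erase.2 ⟨hC, h2⟩, h3,
    fun D hD => h4 D (Finset.mem_of_mem_erase hD)⟩

lemma adj_of_adj_erase {P : Finset (Finset ℕ)} {B0 B C : Finset ℕ}
    (hB0 : B0 ∈ P) (hmin : ∀ D ∈ P, D ≠ B0 → B0.min < D.min)
    (h : Adj (P.erase B0) B C) : Adj P B C := by
  obtain ⟨h1, h2, h3, h4⟩ := h
  refine ⟨Finset.mem_of_mem_erase h1, Finset.mem_of_mem_erase h2, h3, ?_⟩
  intro D hD hcon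
  by_cases hDB0 : D = B0
  · subst hDB0
    have := hmin B (Finset.mem_of_mem_erase h1) (Finset.mem_erase.1 h1).1
    exact absurd hcon.1 (lt_asymm this)
  · exact h4 D (Finset.mem_erase.2 ⟨hDB0, hD⟩) hcon

lemma cont3_peel {P : Finset (Finset ℕ)} {B0 : Finset ℕ} (hB0 : B0 ∈ P)
    (hmin : ∀ D ∈ P, D ≠ B0 → B0.min < D.min)
    (h2 : ∀ C ∈ P, Adj P B0 C → ¬ Pat B0 C ∧ ¬ Pat C B0) :
    Cont3 P ↔ Cont3 (P.erase B0) := by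
  constructor
  · rintro ⟨B, C, hadj, hpat⟩
    have hpat' : Pat B C := hpat
    by_cases hBB0 : B = B0
    · subst hBB0
      rcases hadj with h | h
      · exact absurd hpat' (h2 C h.2.1 h).1
      · have hCne : C ≠ B := fun he => by
          rw [he] at h; exact absurd h.2.2.1 (lt_irrefl _)
        have := hmin C h.1 hCne
        exact absurd h.2.2.1 (lt_asymm this)
    · by_cases hCB0 : C = B0
      · subst hCB0
        rcases hadj with h | h
        · have := hmin B h.1 hBB0
          exact absurd h.2.2.1 (lt_asymm this)
        · exact absurd hpat' (h2 B h.2.1 h).2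
      · refine ⟨B, C, ?_, hpat⟩
        rcases hadj with h | h
        · exact Or.inl (adj_erase_of_adj h hBB0 hCB0)
        · exact Or.inr (adj_erase_of_adj h hCB0 hBB0)
  · rintro ⟨B, C, hadj, hpat⟩
    refine ⟨B, C, ?_, hpat⟩
    rcases hadj with h | h
    · exact Or.inl (adj_of_adj_erase hB0 hmin h)
    · exact Or.inr (adj_of_adj_erase hB0 hmin h)

lemma pat_singleton_left (x : ℕ) (C : Finset ℕ) : ¬ Pat {x} C := by
  rintro ⟨a, ha, b, hb, c, hc, hab, hbc⟩
  rw [Finset.mem_singleton] at ha hb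
  subst ha; subst hb; exact lt_irrefl _ hab

lemma pat_to_singleton {x : ℕ} {C : Finset ℕ} (h : ∀ b ∈ C, x ≤ b) : ¬ Pat C {x} := by
  rintro ⟨a, ha, b, hb, c, hc, hab, hbc⟩
  rw [Finset.mem_singleton] at hc
  subst hc
  exact absurd hbc (not_lt.2 (h b hb))

lemma lt_min_of {k : ℕ} {B : Finset ℕ} (hne : B.Nonempty) (h : ∀ x ∈ B, k < x) :
    (k : WithTop ℕ) < B.min := by
  rw [← Finset.coe_min' hne]
  exact WithTop.coe_lt_coe.2 (h _ (Finset.min'_mem B hne))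

-- elements of blocks other than {1} are ≥ 2
lemma block_elts_ge_two {n : ℕ} {P : Finset (Finset ℕ)} (hP : IsPtn (Finset.Icc 1 n) P)
    (h1 : {1} ∈ P) {D : Finset ℕ} (hD : D ∈ P) (hne : D ≠ {1}) : ∀ x ∈ D, 2 ≤ x := by
  intro x hx
  have hxS : x ∈ Finset.Icc 1 n := subset_of_isPtn hP hD hx
  have hx1 : x ≠ 1 := by
    intro h
    subst h
    have := hP.2.1 D hD {1} h1 hne
    rw [Finset.disjoint_left] at this
    exact this hx (Finset.mem_singleton_self 1)
  rw [Finset.mem_Icc] at hxS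
  omega

lemma card_filter_one (n : ℕ) (hn : 2 ≤ n) :
    ((AP (Finset.Icc 1 n)).filter (fun P => ({1} : Finset ℕ) ∈ P)).card
      = (AP (Finset.Icc 2 n)).card := by
  classical
  apply Finset.card_bij' (fun P _ => P.erase {1}) (fun Q _ => insert {1} Q)
  · -- erase ∘ insert-side: left inverse (i ∘ ... ) : erase then insert gives back P
    intro P hP
    rw [Finset.mem_filter] at hP
    exact Finset.insert_erase hP.2
  · -- insert then erase
    intro Q hQ
    rw [mem_AP] at hQ
    apply Finset.erase_insert
    intro hmem
    have := subset_of_isPtn hQ.1 hmem (Finset.mem_singleton_self 1)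
    rw [Finset.mem_Icc] at this
    omega
  · -- maps forward
    intro P hP
    rw [Finset.mem_filter, mem_AP] at hP
    obtain ⟨⟨hptn, hnc⟩, h1P⟩ := hP
    have hmin : ∀ D ∈ P, D ≠ ({1} : Finset ℕ) → Finset.min {1} < D.min := by
      intro D hD hne
      rw [Finset.min_singleton]
      exact lt_min_of (hptn.1 D hD) (fun x hx => block_elts_ge_two hptn h1P hD hne x hx)
    rw [mem_AP]
    constructor
    · -- IsPtn (Icc 2 n) (P.erase {1})
      refine ⟨fun B hB => hptn.1 B (Finset.mem_of_mem_erase hB),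
        fun B hB C hC h => hptn.2.1 B (Finset.mem_of_mem_erase hB) C (Finset.mem_of_mem_erase hC) h, ?_⟩
      ext x
      rw [Finset.mem_sup]
      constructor
      · rintro ⟨B, hB, hx⟩
        have hBP := Finset.mem_of_mem_erase hB
        have h2 := block_elts_ge_two hptn h1P hBP (Finset.mem_erase.1 hB).1 x hx
        have hxS := subset_of_isPtn hptn hBP hx
        rw [Finset.mem_Icc] at hxS ⊢
        omega
      · intro hx
        rw [Finset.mem_Icc] at hx
        have hxS : x ∈ P.sup id := by
          rw [hptn.2.2, Finset.mem_Icc]; omega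
        obtain ⟨B, hB, hxB⟩ := Finset.mem_sup.1 hxS
        refine ⟨B, Finset.mem_erase.2 ⟨?_, hB⟩, hxB⟩
        intro h
        subst h
        simp only [id, Finset.mem_singleton] at hxB
        omega
    · -- avoids
      intro hc
      apply hnc
      rw [cont3_peel h1P hmin]
      · exact hc
      · intro C hC hadj
        have hCne : C ≠ {1} := by
          intro h; subst h; exact absurd hadj.2.2.1 (lt_irrefl _)
        refine ⟨pat_singleton_left 1 C, pat_to_singleton ?_⟩
        intro b hb
        have := subset_of_isPtn hptn hC hb
        rw [Finset.mem_Icc] at this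
        omega
  · -- maps backward
    intro Q hQ
    rw [mem_AP] at hQ
    obtain ⟨hptn, hnc⟩ := hQ
    have h1nQ : ({1} : Finset ℕ) ∉ Q := by
      intro hmem
      have := subset_of_isPtn hptn hmem (Finset.mem_singleton_self 1)
      rw [Finset.mem_Icc] at this
      omega
    have helts : ∀ B ∈ Q, ∀ x ∈ B, 2 ≤ x := by
      intro B hB x hx
      have := subset_of_isPtn hptn hB hx
      rw [Finset.mem_Icc] at this
      omega
    have hptn' : IsPtn (Finset.Icc 1 n) (insert {1} Q) := by
      refine ⟨?_, ?_, ?_⟩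
      · intro B hB
        rcases Finset.mem_insert.1 hB with h | h
        · subst h; exact ⟨1, Finset.mem_singleton_self 1⟩
        · exact hptn.1 B h
      · intro B hB C hC hne
        rcases Finset.mem_insert.1 hB with h | h <;> rcases Finset.mem_insert.1 hC with h' | h'
        · subst h; subst h'; exact absurd rfl hne
        · subst h
          rw [Finset.disjoint_left]
          intro x hx
          rw [Finset.mem_singleton] at hx
          subst hx
          intro hmem
          exact absurd (helts C h' 1 hmem) (by omega)
        · subst h'
          rw [Finset.disjoint_right]
          intro x hx
          rw [Finset.mem_singleton] at hx
          subst hx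
          intro hmem
          exact absurd (helts B h 1 hmem) (by omega)
        · exact hptn.2.1 B h C h' hne
      · ext x
        rw [Finset.mem_sup]
        constructor
        · rintro ⟨B, hB, hx⟩
          rcases Finset.mem_insert.1 hB with h | h
          · subst h
            simp only [id, Finset.mem_singleton] at hx
            subst hx
            rw [Finset.mem_Icc]; omega
          · have := subset_of_isPtn hptn h hx
            rw [Finset.mem_Icc] at this ⊢; omega
        · intro hx
          rw [Finset.mem_Icc] at hx
          by_cases hx1 : x = 1
          · exact ⟨{1}, Finset.mem_insert_self _ _, by rw [hx1]; exact Finset.mem_singleton_self 1⟩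
          · have : x ∈ Q.sup id := by rw [hptn.2.2, Finset.mem_Icc]; omega
            obtain ⟨B, hB, hxB⟩ := Finset.mem_sup.1 this
            exact ⟨B, Finset.mem_insert_of_mem hB, hxB⟩
    rw [Finset.mem_filter, mem_AP]
    refine ⟨⟨hptn', ?_⟩, Finset.mem_insert_self _ _⟩
    intro hc
    apply hnc
    have hmin : ∀ D ∈ insert {1} Q, D ≠ ({1} : Finset ℕ) → Finset.min {1} < D.min := by
      intro D hD hne
      rw [Finset.min_singleton]
      have hDQ : D ∈ Q := by
        rcases Finset.mem_insert.1 hD with h | h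
        · exact absurd h hne
        · exact h
      exact lt_min_of (hptn.1 D hDQ) (fun x hx => lt_of_lt_of_le one_lt_two (helts D hDQ x hx))
    rw [cont3_peel (Finset.mem_insert_self _ _) hmin] at hc
    · rwa [Finset.erase_insert h1nQ] at hc
    · intro C hC hadj
      have hCne : C ≠ {1} := by
        intro h; subst h; exact absurd hadj.2.2.1 (lt_irrefl _)
      have hCQ : C ∈ Q := by
        rcases Finset.mem_insert.1 hC with h | h
        · exact absurd h hCne
        · exact h
      exact ⟨pat_singleton_left 1 C, pat_to_singleton (fun b hb =>
        le_trans (by omega) (helts C hCQ b hb))⟩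

lemma min_eq {k : ℕ} {B : Finset ℕ} (hk : k ∈ B) (h : ∀ x ∈ B, k ≤ x) :
    B.min = (k : WithTop ℕ) := by
  apply le_antisymm
  · exact Finset.min_le hk
  · exact Finset.le_min (fun y hy => WithTop.coe_le_coe.2 (h y hy))

lemma cont3_double_peel {n : ℕ} {T : Finset ℕ} {QQ : Finset (Finset ℕ)}
    (hT : T ⊆ Finset.Icc 3 n) (hQb : ∀ B ∈ QQ, B ⊆ (Finset.Icc 3 n) \ T)
    (hQne : ∀ B ∈ QQ, B.Nonempty) :
    Cont3 (insert (insert 1 T) (insert {2} QQ)) ↔ Cont3 QQ := by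
  classical
  set B1 : Finset ℕ := insert 1 T with hB1def
  have hQ3 : ∀ B ∈ QQ, ∀ x ∈ B, 3 ≤ x := by
    intro B hB x hx
    have := hQb B hB hx
    rw [Finset.mem_sdiff, Finset.mem_Icc] at this
    omega
  have hTmem : ∀ x ∈ T, 3 ≤ x := fun x hx => by
    have := hT hx; rw [Finset.mem_Icc] at this; omega
  have hB1mem : ∀ x ∈ B1, x = 1 ∨ 3 ≤ x := by
    intro x hx
    rcases Finset.mem_insert.1 hx with h | h
    · exact Or.inl h
    · exact Or.inr (hTmem x h)
  have h1B1 : (1 : ℕ) ∈ B1 := Finset.mem_insert_self 1 T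
  have hB1ne2 : B1 ≠ {2} := by
    intro h
    have := h ▸ h1B1
    rw [Finset.mem_singleton] at this
    omega
  have hB1nQ : B1 ∉ QQ := by
    intro h
    exact absurd (hQ3 B1 h 1 h1B1) (by omega)
  have h2nQ : ({2} : Finset ℕ) ∉ QQ := by
    intro h
    exact absurd (hQ3 {2} h 2 (Finset.mem_singleton_self 2)) (by omega)
  have hB1min : B1.min = ((1:ℕ) : WithTop ℕ) :=
    min_eq h1B1 (fun x hx => by rcases hB1mem x hx with h | h <;> omega)
  have hpatB12 : ¬ Pat B1 {2} := by
    rintro ⟨a, ha, b, hb, c, hc, hab, hbc⟩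
    rw [Finset.mem_singleton] at hc
    subst hc
    rcases hB1mem b hb with h | h
    · subst h; rcases hB1mem a ha with h' | h' <;> omega
    · omega
  set P : Finset (Finset ℕ) := insert B1 (insert {2} QQ) with hPdef
  have step1 : Cont3 P ↔ Cont3 (insert {2} QQ) := by
    have hmin : ∀ D ∈ P, D ≠ B1 → B1.min < D.min := by
      intro D hD hne
      rw [hB1min]
      rcases Finset.mem_insert.1 hD with h | h
      · exact absurd h hne
      rcases Finset.mem_insert.1 h with h' | h'
      · subst h'
        exact lt_min_of (k:=1) ⟨2, Finset.mem_singleton_self 2⟩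
          (fun x hx => by rw [Finset.mem_singleton] at hx; omega)
      · exact lt_min_of (k:=1) (hQne D h') (fun x hx => by have := hQ3 D h' x hx; omega)
    have h2 : ∀ C ∈ P, Adj P B1 C → ¬ Pat B1 C ∧ ¬ Pat C B1 := by
      intro C hC hadj
      have hC2 : C = {2} := by
        have hne : C ≠ B1 := by
          intro h; subst h; exact absurd hadj.2.2.1 (lt_irrefl _)
        have h2P : ({2} : Finset ℕ) ∈ P := Finset.mem_insert_of_mem (Finset.mem_insert_self _ _)
        have hbetw := hadj.2.2.2 {2} h2P
        rw [hB1min, Finset.min_singleton] at hbetw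
        push_neg at hbetw
        have hble : C.min ≤ ((2:ℕ) : WithTop ℕ) :=
          hbetw (WithTop.coe_lt_coe.2 (show (1:ℕ) < 2 by omega))
        rcases Finset.mem_insert.1 hC with h | h
        · exact absurd h hne
        rcases Finset.mem_insert.1 h with h' | h'
        · exact h'
        · exfalso
          have := lt_min_of (k:=2) (hQne C h') (fun x hx => by have := hQ3 C h' x hx; omega)
          exact absurd (lt_of_le_of_lt hble this) (lt_irrefl _)
      subst hC2
      exact ⟨hpatB12, pat_singleton_left 2 B1⟩
    have e1 : P.erase B1 = insert {2} QQ := by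
      rw [hPdef]
      apply Finset.erase_insert
      intro h
      rcases Finset.mem_insert.1 h with h' | h'
      · exact hB1ne2 h'
      · exact hB1nQ h'
    rw [cont3_peel (Finset.mem_insert_self _ _) hmin h2, e1]
  have step2 : Cont3 (insert {2} QQ) ↔ Cont3 QQ := by
    set P' : Finset (Finset ℕ) := insert {2} QQ with hP'def
    have hmin : ∀ D ∈ P', D ≠ ({2} : Finset ℕ) → Finset.min {2} < D.min := by
      intro D hD hne
      rw [Finset.min_singleton]
      rcases Finset.mem_insert.1 hD with h | h
      · exact absurd h hne
      · exact lt_min_of (k:=2) (hQne D h) (fun x hx => by have := hQ3 D h x hx; omega)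
    have h2 : ∀ C ∈ P', Adj P' {2} C → ¬ Pat {2} C ∧ ¬ Pat C {2} := by
      intro C hC hadj
      have hne : C ≠ ({2} : Finset ℕ) := by
        intro h; subst h; exact absurd hadj.2.2.1 (lt_irrefl _)
      have hCQ : C ∈ QQ := by
        rcases Finset.mem_insert.1 hC with h | h
        · exact absurd h hne
        · exact h
      exact ⟨pat_singleton_left 2 C,
        pat_to_singleton (fun b hb => le_trans (by omega) (hQ3 C hCQ b hb))⟩
    rw [cont3_peel (Finset.mem_insert_self _ _) hmin h2, Finset.erase_insert h2nQ]
  exact step1.trans step2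

lemma struct_mem {n : ℕ} (hn : 2 ≤ n) {T : Finset ℕ} (hT : T ⊆ Finset.Icc 3 n)
    (hTne : T.Nonempty) {Q : Finset (Finset ℕ)} (hQ : Q ∈ AP ((Finset.Icc 3 n) \ T)) :
    insert (insert 1 T) (insert {2} Q) ∈ AP (Finset.Icc 1 n)
    ∧ ({1} : Finset ℕ) ∉ insert (insert 1 T) (insert {2} Q)
    ∧ insert (insert 1 T) (insert {2} Q) ≠ {Finset.Icc 1 n} := by
  classical
  rw [mem_AP] at hQ
  obtain ⟨hptn, hnc⟩ := hQ
  have hQb : ∀ B ∈ Q, B ⊆ (Finset.Icc 3 n) \ T := fun B hB => subset_of_isPtn hptn hB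
  have hQ3 : ∀ B ∈ Q, ∀ x ∈ B, 3 ≤ x ∧ x ≤ n ∧ x ∉ T := by
    intro B hB x hx
    have := hQb B hB hx
    rw [Finset.mem_sdiff, Finset.mem_Icc] at this
    exact ⟨this.1.1, this.1.2, this.2⟩
  have hTmem : ∀ x ∈ T, 3 ≤ x ∧ x ≤ n := fun x hx => by
    have := hT hx; rw [Finset.mem_Icc] at this; exact this
  set B1 : Finset ℕ := insert 1 T with hB1def
  have hB1mem : ∀ x ∈ B1, x = 1 ∨ (3 ≤ x ∧ x ≤ n ∧ x ∈ T) := by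
    intro x hx
    rcases Finset.mem_insert.1 hx with h | h
    · exact Or.inl h
    · exact Or.inr ⟨(hTmem x h).1, (hTmem x h).2, h⟩
  obtain ⟨t, ht⟩ := hTne
  refine ⟨?_, ?_, ?_⟩
  · rw [mem_AP]
    constructor
    · refine ⟨?_, ?_, ?_⟩
      · intro B hB
        rcases Finset.mem_insert.1 hB with h | h
        · subst h; exact ⟨1, Finset.mem_insert_self _ _⟩
        rcases Finset.mem_insert.1 h with h' | h'
        · subst h'; exact ⟨2, Finset.mem_singleton_self 2⟩
        · exact hptn.1 B h'
      · intro B hB C hC hne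
        rw [Finset.disjoint_left]
        intro x hxB hxC
        rcases Finset.mem_insert.1 hB with h | h
        · -- B = B1
          subst h
          rcases Finset.mem_insert.1 hC with h' | h'
          · exact hne (h'.symm)
          rcases Finset.mem_insert.1 h' with h'' | h''
          · subst h''
            rw [Finset.mem_singleton] at hxC
            subst hxC
            rcases hB1mem 2 hxB with h3 | h3 <;> omega
          · rcases hB1mem x hxB with h3 | h3
            · subst h3; exact absurd (hQ3 C h'' 1 hxC).1 (by omega)
            · exact (hQ3 C h'' x hxC).2.2 h3.2.2
        rcases Finset.mem_insert.1 h with h' | h'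
        · -- B = {2}
          subst h'
          rw [Finset.mem_singleton] at hxB
          subst hxB
          rcases Finset.mem_insert.1 hC with h'' | h''
          · subst h''; rcases hB1mem 2 hxC with h3 | h3 <;> omega
          rcases Finset.mem_insert.1 h'' with h3 | h3
          · exact hne (h3.symm)
          · exact absurd (hQ3 C h3 2 hxC).1 (by omega)
        · -- B ∈ Q
          rcases Finset.mem_insert.1 hC with h'' | h''
          · subst h''
            rcases hB1mem x hxC with h3 | h3
            · subst h3; exact absurd (hQ3 B h' 1 hxB).1 (by omega)
            · exact (hQ3 B h' x hxB).2.2 h3.2.2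
          rcases Finset.mem_insert.1 h'' with h3 | h3
          · subst h3
            rw [Finset.mem_singleton] at hxC
            subst hxC
            exact absurd (hQ3 B h' 2 hxB).1 (by omega)
          · have := hptn.2.1 B h' C h3 hne
            rw [Finset.disjoint_left] at this
            exact this hxB hxC
      · ext x
        rw [Finset.mem_sup, Finset.mem_Icc]
        constructor
        · rintro ⟨B, hB, hx⟩
          rcases Finset.mem_insert.1 hB with h | h
          · subst h
            rcases hB1mem x hx with h3 | h3 <;> omega
          rcases Finset.mem_insert.1 h with h' | h'
          · subst h'
            simp only [id, Finset.mem_singleton] at hx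
            omega
          · have := hQ3 B h' x hx
            omega
        · intro hx
          by_cases hx1 : x = 1
          · exact ⟨B1, Finset.mem_insert_self _ _, by rw [hx1]; exact Finset.mem_insert_self _ _⟩
          by_cases hx2 : x = 2
          · exact ⟨{2}, Finset.mem_insert_of_mem (Finset.mem_insert_self _ _),
              by rw [hx2]; exact Finset.mem_singleton_self 2⟩
          by_cases hxT : x ∈ T
          · exact ⟨B1, Finset.mem_insert_self _ _, Finset.mem_insert_of_mem hxT⟩
          · have : x ∈ Q.sup id := by
              rw [hptn.2.2, Finset.mem_sdiff, Finset.mem_Icc]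
              exact ⟨⟨by omega, by omega⟩, hxT⟩
            obtain ⟨B, hB, hxB⟩ := Finset.mem_sup.1 this
            exact ⟨B, Finset.mem_insert_of_mem (Finset.mem_insert_of_mem hB), hxB⟩
    · intro hc
      rw [cont3_double_peel hT (fun B hB => hQb B hB) (fun B hB => hptn.1 B hB)] at hc
      exact hnc hc
  · intro hmem
    rcases Finset.mem_insert.1 hmem with h | h
    · have : t ∈ ({1} : Finset ℕ) := h ▸ Finset.mem_insert_of_mem ht
      rw [Finset.mem_singleton] at this
      exact absurd ((hTmem t ht).1) (by omega)
    rcases Finset.mem_insert.1 h with h' | h'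
    · have : (1:ℕ) ∈ ({2} : Finset ℕ) := h' ▸ Finset.mem_singleton_self 1
      rw [Finset.mem_singleton] at this
      omega
    · exact absurd (hQ3 {1} h' 1 (Finset.mem_singleton_self 1)).1 (by omega)
  · intro heq
    have h2mem : ({2} : Finset ℕ) ∈ insert B1 (insert {2} Q) :=
      Finset.mem_insert_of_mem (Finset.mem_insert_self _ _)
    rw [heq, Finset.mem_singleton] at h2mem
    have : (1:ℕ) ∈ ({2} : Finset ℕ) := by
      rw [h2mem, Finset.mem_Icc]; omega
    rw [Finset.mem_singleton] at this
    omega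

lemma struct_decomp {n : ℕ} (hn : 2 ≤ n) {P : Finset (Finset ℕ)} (hP : P ∈ AP (Finset.Icc 1 n))
    (h1 : ({1} : Finset ℕ) ∉ P) (hS : P ≠ {Finset.Icc 1 n}) :
    ∃ T, T ⊆ Finset.Icc 3 n ∧ T.Nonempty ∧ ∃ Q ∈ AP ((Finset.Icc 3 n) \ T),
      P = insert (insert 1 T) (insert {2} Q) := by
  classical
  rw [mem_AP] at hP
  obtain ⟨hptn, hnc⟩ := hP
  have h1S : (1:ℕ) ∈ Finset.Icc 1 n := by rw [Finset.mem_Icc]; omega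
  have h1sup : (1:ℕ) ∈ P.sup id := by rw [hptn.2.2]; exact h1S
  obtain ⟨B1, hB1P, h1B1⟩ := Finset.mem_sup.1 h1sup
  simp only [id] at h1B1
  have hB1S : B1 ⊆ Finset.Icc 1 n := subset_of_isPtn hptn hB1P
  have hB1ne1 : B1 ≠ {1} := fun h => h1 (h ▸ hB1P)
  have ht : ∃ t ∈ B1, t ≠ 1 := by
    by_contra hcon
    push_neg at hcon
    apply hB1ne1
    apply Finset.Subset.antisymm
    · intro x hx; rw [Finset.mem_singleton]; exact hcon x hx
    · intro x hx; rw [Finset.mem_singleton] at hx; subst hx; exact h1B1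
  obtain ⟨t, htB1, ht1⟩ := ht
  -- complement of B1 is nonempty
  have hcomp : ((Finset.Icc 1 n) \ B1).Nonempty := by
    rw [Finset.sdiff_nonempty]
    intro hsub
    have hB1eq : B1 = Finset.Icc 1 n := Finset.Subset.antisymm hB1S hsub
    apply hS
    apply Finset.Subset.antisymm
    · intro D hD
      rw [Finset.mem_singleton]
      by_contra hne
      have hdisj := hptn.2.1 D hD B1 hB1P (by rw [hB1eq]; exact hne)
      obtain ⟨x, hx⟩ := hptn.1 D hD
      have hxS : x ∈ Finset.Icc 1 n := subset_of_isPtn hptn hD hx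
      rw [Finset.disjoint_left] at hdisj
      exact hdisj hx (by rw [hB1eq]; exact hxS)
    · intro D hD
      rw [Finset.mem_singleton] at hD
      subst hD
      rw [← hB1eq]
      exact hB1P
  obtain ⟨m, hmdef⟩ : ∃ m', m' = ((Finset.Icc 1 n) \ B1).min' hcomp := ⟨_, rfl⟩
  have hmmem := Finset.min'_mem _ hcomp
  rw [← hmdef, Finset.mem_sdiff] at hmmem
  obtain ⟨hmS, hmB1⟩ := hmmem
  have hmle : ∀ x ∈ Finset.Icc 1 n, x ∉ B1 → m ≤ x := by
    intro x hx hxB1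
    rw [hmdef]
    exact Finset.min'_le _ x (Finset.mem_sdiff.2 ⟨hx, hxB1⟩)
  have hm2 : 2 ≤ m := by
    have hle : 1 ≤ m := (Finset.mem_Icc.1 hmS).1
    have hne : m ≠ 1 := fun h => hmB1 (by rw [h]; exact h1B1)
    omega
  have hmsup : m ∈ P.sup id := by rw [hptn.2.2]; exact hmS
  obtain ⟨C, hCP, hmC⟩ := Finset.mem_sup.1 hmsup
  simp only [id] at hmC
  have hCB1 : C ≠ B1 := fun h => hmB1 (h ▸ hmC)
  have hother : ∀ D ∈ P, D ≠ B1 → ∀ x ∈ D, m ≤ x := by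
    intro D hD hne x hx
    have hdisj := hptn.2.1 D hD B1 hB1P hne
    rw [Finset.disjoint_left] at hdisj
    exact hmle x (subset_of_isPtn hptn hD hx) (hdisj hx)
  have hCmin : C.min = (m : WithTop ℕ) := min_eq hmC (hother C hCP hCB1)
  have hB1min : B1.min = ((1:ℕ) : WithTop ℕ) :=
    min_eq h1B1 (fun x hx => (Finset.mem_Icc.1 (hB1S hx)).1)
  have hadj : Adj P B1 C := by
    refine ⟨hB1P, hCP, ?_, ?_⟩
    · rw [hB1min, hCmin]
      exact_mod_cast (show (1:ℕ) < m by omega)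
    · rintro D hD ⟨hd1, hd2⟩
      by_cases hDB1 : D = B1
      · subst hDB1
        rw [hB1min] at hd1
        exact absurd hd1 (lt_irrefl _)
      · have : (m : WithTop ℕ) ≤ D.min :=
          Finset.le_min (fun y hy => WithTop.coe_le_coe.2 (hother D hD hDB1 y hy))
        rw [hCmin] at hd2
        exact absurd (lt_of_le_of_lt this hd2) (lt_irrefl _)
  have hnp1 : ¬ Pat B1 C := fun hp => hnc ⟨B1, C, Or.inl hadj, hp⟩
  have hnp2 : ¬ Pat C B1 := fun hp => hnc ⟨C, B1, Or.inr hadj, hp⟩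
  have hCdisj : ∀ x ∈ C, x ∉ B1 := by
    intro x hx
    have hdisj := hptn.2.1 C hCP B1 hB1P hCB1
    rw [Finset.disjoint_left] at hdisj
    exact hdisj hx
  have hm : m = 2 := by
    by_contra hcon
    have hm3 : 3 ≤ m := by omega
    have h2B1 : (2:ℕ) ∈ B1 := by
      by_contra h2con
      have := hmle 2 (by rw [Finset.mem_Icc]; omega) h2con
      omega
    exact hnp1 ⟨1, h1B1, 2, h2B1, m, hmC, by omega, by omega⟩
  subst hm
  have ht2 : 3 ≤ t := by
    have htS := Finset.mem_Icc.1 (hB1S htB1)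
    have : t ≠ 2 := fun h => hCdisj 2 hmC (h ▸ htB1)
    omega
  have hC2 : C = {2} := by
    apply Finset.Subset.antisymm
    · intro x hx
      rw [Finset.mem_singleton]
      by_contra hxne
      have hxge : 2 ≤ x := hother C hCP hCB1 x hx
      have hx2 : 2 < x := by omega
      have hxt : ¬ (1 < t ∧ t < x) := by
        intro hcon
        exact hnp1 ⟨1, h1B1, t, htB1, x, hx, hcon.1, hcon.2⟩
      push_neg at hxt
      have : x ≤ t := hxt (by omega)
      have hxnet : x ≠ t := fun h => hCdisj x hx (h ▸ htB1)
      exact hnp2 ⟨2, hmC, x, hx, t, htB1, hx2, by omega⟩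
    · intro x hx
      rw [Finset.mem_singleton] at hx
      subst hx
      exact hmC
  subst hC2
  set T := B1.erase 1 with hTdef
  have h2nB1 : (2:ℕ) ∉ B1 := hCdisj 2 hmC
  have hT : T ⊆ Finset.Icc 3 n := by
    intro x hx
    rw [Finset.mem_erase] at hx
    have hxS := Finset.mem_Icc.1 (hB1S hx.2)
    have : x ≠ 2 := fun h => h2nB1 (h ▸ hx.2)
    rw [Finset.mem_Icc]
    omega
  have hTne : T.Nonempty := ⟨t, Finset.mem_erase.2 ⟨ht1, htB1⟩⟩
  set Q := (P.erase B1).erase {2} with hQdef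
  have h2PeB1 : ({2} : Finset ℕ) ∈ P.erase B1 := Finset.mem_erase.2 ⟨hCB1, hCP⟩
  have hPeq : P = insert B1 (insert {2} Q) := by
    rw [hQdef, Finset.insert_erase h2PeB1, Finset.insert_erase hB1P]
  have hQmem : ∀ D ∈ Q, D ∈ P ∧ D ≠ B1 ∧ D ≠ ({2} : Finset ℕ) := by
    intro D hD
    rw [hQdef, Finset.mem_erase, Finset.mem_erase] at hD
    exact ⟨hD.2.2, hD.2.1, hD.1⟩
  have hQelts : ∀ D ∈ Q, ∀ x ∈ D, x ∈ (Finset.Icc 3 n) \ T := by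
    intro D hD x hx
    obtain ⟨hDP, hDB1, hD2⟩ := hQmem D hD
    have hxS := Finset.mem_Icc.1 (subset_of_isPtn hptn hDP hx)
    have hxB1 : x ∉ B1 := by
      have hdisj := hptn.2.1 D hDP B1 hB1P hDB1
      rw [Finset.disjoint_left] at hdisj
      exact hdisj hx
    have hx2 : x ≠ 2 := by
      intro h
      subst h
      have hdisj := hptn.2.1 D hDP {2} hCP hD2
      rw [Finset.disjoint_left] at hdisj
      exact hdisj hx (Finset.mem_singleton_self 2)
    have hx1 : x ≠ 1 := fun h => hxB1 (h ▸ h1B1)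
    rw [Finset.mem_sdiff, Finset.mem_Icc]
    exact ⟨⟨by omega, hxS.2⟩, fun hc => hxB1 (Finset.mem_of_mem_erase hc)⟩
  have hQptn : IsPtn ((Finset.Icc 3 n) \ T) Q := by
    refine ⟨fun B hB => hptn.1 B (hQmem B hB).1,
      fun B hB C' hC' h => hptn.2.1 B (hQmem B hB).1 C' (hQmem C' hC').1 h, ?_⟩
    apply Finset.Subset.antisymm
    · intro x hx
      obtain ⟨D, hD, hxD⟩ := Finset.mem_sup.1 hx
      exact hQelts D hD x hxD
    · intro x hx
      rw [Finset.mem_sdiff, Finset.mem_Icc] at hx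
      have hxsup : x ∈ P.sup id := by
        rw [hptn.2.2, Finset.mem_Icc]; omega
      obtain ⟨D, hD, hxD⟩ := Finset.mem_sup.1 hxsup
      refine Finset.mem_sup.2 ⟨D, ?_, hxD⟩
      rw [hQdef, Finset.mem_erase, Finset.mem_erase]
      refine ⟨?_, ?_, hD⟩
      · intro h
        subst h
        simp only [id, Finset.mem_singleton] at hxD
        omega
      · intro h
        subst h
        have hx1 : x ≠ 1 := by omega
        exact hx.2 (Finset.mem_erase.2 ⟨hx1, hxD⟩)
  have hB1T : B1 = insert 1 T := by rw [hTdef, Finset.insert_erase h1B1]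
  have havoid : ¬ Cont3 Q := by
    intro hc
    apply hnc
    rw [hPeq, hB1T]
    exact (cont3_double_peel hT (fun B hB => subset_of_isPtn hQptn hB)
      (fun B hB => hQptn.1 B hB)).2 hc
  refine ⟨T, hT, hTne, Q, mem_AP.2 ⟨hQptn, havoid⟩, ?_⟩
  rw [hPeq, hB1T]

lemma part3_card (n : ℕ) (hn : 2 ≤ n) :
    ((AP (Finset.Icc 1 n)).filter
        (fun P => ({1} : Finset ℕ) ∉ P ∧ P ≠ {Finset.Icc 1 n})).card
      = ∑ k ∈ Finset.Icc 1 (n - 2), Nat.choose (n - 2) k * a (n - k - 2) := by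
  classical
  set ins : Finset ℕ → Finset (Finset ℕ) → Finset (Finset ℕ) :=
    fun T Q => insert (insert 1 T) (insert {2} Q) with hins
  set 𝒯 : Finset (Finset ℕ) := (Finset.Icc 3 n).powerset.filter (fun T => T.Nonempty) with hTT
  have hTTmem : ∀ T, T ∈ 𝒯 ↔ T ⊆ Finset.Icc 3 n ∧ T.Nonempty := by
    intro T
    rw [hTT, Finset.mem_filter, Finset.mem_powerset]
  -- recover T from ins T Q
  have hrec : ∀ T ∈ 𝒯, ∀ Q ∈ AP ((Finset.Icc 3 n) \ T), ∀ T' ∈ 𝒯,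
      ∀ Q' ∈ AP ((Finset.Icc 3 n) \ T'), ins T Q = ins T' Q' → T = T' ∧ Q = Q' := by
    intro T hT Q hQ T' hT' Q' hQ' heq
    have hT3 := (hTTmem T).1 hT
    have hT'3 := (hTTmem T').1 hT'
    have h1T : (1:ℕ) ∉ T := fun h => by
      have := hT3.1 h; rw [Finset.mem_Icc] at this; omega
    have h1T' : (1:ℕ) ∉ T' := fun h => by
      have := hT'3.1 h; rw [Finset.mem_Icc] at this; omega
    have hQb : ∀ B ∈ Q, ∀ x ∈ B, 3 ≤ x := by
      intro B hB x hx
      have := subset_of_isPtn (mem_AP.1 hQ).1 hB hx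
      rw [Finset.mem_sdiff, Finset.mem_Icc] at this
      omega
    have hQb' : ∀ B ∈ Q', ∀ x ∈ B, 3 ≤ x := by
      intro B hB x hx
      have := subset_of_isPtn (mem_AP.1 hQ').1 hB hx
      rw [Finset.mem_sdiff, Finset.mem_Icc] at this
      omega
    have hTeq : T = T' := by
      have hB1 : insert 1 T ∈ ins T' Q' := by
        rw [← heq]; exact Finset.mem_insert_self _ _
      rcases Finset.mem_insert.1 hB1 with h | h
      · have := congrArg (fun s => Finset.erase s 1) h
        simpa [Finset.erase_insert h1T, Finset.erase_insert h1T'] using this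
      rcases Finset.mem_insert.1 h with h' | h'
      · exfalso
        have : (1:ℕ) ∈ ({2} : Finset ℕ) := h' ▸ Finset.mem_insert_self 1 T
        rw [Finset.mem_singleton] at this
        omega
      · exact absurd (hQb' _ h' 1 (Finset.mem_insert_self 1 T)) (by omega)
    subst hTeq
    refine ⟨rfl, ?_⟩
    have hB1nQ : ∀ QQ : Finset (Finset ℕ), (∀ B ∈ QQ, ∀ x ∈ B, 3 ≤ x) →
        insert 1 T ∉ insert {2} QQ := by
      intro QQ hb hmem
      rcases Finset.mem_insert.1 hmem with h | h
      · have : (1:ℕ) ∈ ({2} : Finset ℕ) := h ▸ Finset.mem_insert_self 1 T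
        rw [Finset.mem_singleton] at this
        omega
      · exact absurd (hb _ h 1 (Finset.mem_insert_self 1 T)) (by omega)
    have h2nQ : ({2} : Finset ℕ) ∉ Q := fun h =>
      absurd (hQb _ h 2 (Finset.mem_singleton_self 2)) (by omega)
    have h2nQ' : ({2} : Finset ℕ) ∉ Q' := fun h =>
      absurd (hQb' _ h 2 (Finset.mem_singleton_self 2)) (by omega)
    have := congrArg (fun s => (Finset.erase s (insert 1 T)).erase ({2} : Finset ℕ)) heq
    simpa [hins, Finset.erase_insert (hB1nQ Q hQb), Finset.erase_insert (hB1nQ Q' hQb'),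
      Finset.erase_insert h2nQ, Finset.erase_insert h2nQ'] using this
  have hsplit : (AP (Finset.Icc 1 n)).filter
      (fun P => ({1} : Finset ℕ) ∉ P ∧ P ≠ {Finset.Icc 1 n})
      = 𝒯.biUnion (fun T => (AP ((Finset.Icc 3 n) \ T)).image (ins T)) := by
    ext P
    rw [Finset.mem_filter, Finset.mem_biUnion]
    constructor
    · rintro ⟨hP, h1, hS⟩
      obtain ⟨T, hT, hTne, Q, hQ, hPeq⟩ := struct_decomp hn hP h1 hS
      exact ⟨T, (hTTmem T).2 ⟨hT, hTne⟩, Finset.mem_image.2 ⟨Q, hQ, hPeq.symm⟩⟩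
    · rintro ⟨T, hT, hP⟩
      obtain ⟨Q, hQ, rfl⟩ := Finset.mem_image.1 hP
      obtain ⟨hmem, h1, hS⟩ := struct_mem hn ((hTTmem T).1 hT).1 ((hTTmem T).1 hT).2 hQ
      exact ⟨hmem, h1, hS⟩
  rw [hsplit]
  rw [Finset.card_biUnion]
  · -- sum computation
    have hstep : ∀ T ∈ 𝒯, ((AP ((Finset.Icc 3 n) \ T)).image (ins T)).card
        = a (n - T.card - 2) := by
      intro T hT
      rw [Finset.card_image_of_injOn]
      · rw [AP_card]
        congr 1
        rw [Finset.card_sdiff_of_subset ((hTTmem T).1 hT).1, Nat.card_Icc]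
        omega
      · intro Q hQ Q' hQ' heq
        exact (hrec T hT Q hQ T hT Q' hQ' heq).2
    rw [Finset.sum_congr rfl hstep]
    -- group by cardinality
    have hTT2 : 𝒯 = (Finset.Icc 1 (n-2)).biUnion
        (fun k => Finset.powersetCard k (Finset.Icc 3 n)) := by
      ext T
      rw [hTTmem, Finset.mem_biUnion]
      constructor
      · rintro ⟨hsub, hne⟩
        refine ⟨T.card, ?_, Finset.mem_powersetCard.2 ⟨hsub, rfl⟩⟩
        rw [Finset.mem_Icc]
        constructor
        · exact Finset.card_pos.2 hne
        · have := Finset.card_le_card hsub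
          rw [Nat.card_Icc] at this
          omega
      · rintro ⟨k, hk, hT⟩
        obtain ⟨hsub, hcard⟩ := Finset.mem_powersetCard.1 hT
        rw [Finset.mem_Icc] at hk
        exact ⟨hsub, Finset.card_pos.1 (by omega)⟩
    rw [hTT2, Finset.sum_biUnion]
    · apply Finset.sum_congr rfl
      intro k hk
      have : ∀ T ∈ Finset.powersetCard k (Finset.Icc 3 n),
          a (n - T.card - 2) = a (n - k - 2) := by
        intro T hT
        rw [(Finset.mem_powersetCard.1 hT).2]
      rw [Finset.sum_congr rfl this, Finset.sum_const, Finset.card_powersetCard,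
        Nat.card_Icc, smul_eq_mul, show n + 1 - 3 = n - 2 by omega]
    · -- disjointness of powersetCard
      intro k hk l hl hkl
      simp only [Function.onFun]
      rw [Finset.disjoint_left]
      intro T hTk hTl
      exact hkl ((Finset.mem_powersetCard.1 hTk).2.symm.trans (Finset.mem_powersetCard.1 hTl).2)
  · -- disjointness of biUnion over T
    intro T hT T' hT' hne
    rw [Function.onFun, Finset.disjoint_left]
    intro P hP hP'
    obtain ⟨Q, hQ, rfl⟩ := Finset.mem_image.1 hP
    obtain ⟨Q', hQ', heq⟩ := Finset.mem_image.1 hP'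
    exact hne (hrec T hT Q hQ T' hT' Q' hQ' heq.symm).1

lemma part2_card (n : ℕ) (hn : 2 ≤ n) :
    ((AP (Finset.Icc 1 n)).filter
        (fun P => ({1} : Finset ℕ) ∉ P ∧ P = {Finset.Icc 1 n})).card = 1 := by
  classical
  have hmem : ({Finset.Icc 1 n} : Finset (Finset ℕ)) ∈ AP (Finset.Icc 1 n) := by
    rw [mem_AP]
    refine ⟨⟨?_, ?_, ?_⟩, not_cont3_singleton _⟩
    · intro B hB
      rw [Finset.mem_singleton] at hB
      subst hB
      exact ⟨1, by rw [Finset.mem_Icc]; omega⟩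
    · intro B hB C hC hne
      rw [Finset.mem_singleton] at hB hC
      exact absurd (hB.trans hC.symm) hne
    · simp
  have h1n : ({1} : Finset ℕ) ∉ ({Finset.Icc 1 n} : Finset (Finset ℕ)) := by
    rw [Finset.mem_singleton]
    intro h
    have : (2:ℕ) ∈ ({1} : Finset ℕ) := by rw [h, Finset.mem_Icc]; omega
    rw [Finset.mem_singleton] at this
    omega
  have : (AP (Finset.Icc 1 n)).filter
      (fun P => ({1} : Finset ℕ) ∉ P ∧ P = {Finset.Icc 1 n})
      = {({Finset.Icc 1 n} : Finset (Finset ℕ))} := by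
    ext P
    rw [Finset.mem_filter, Finset.mem_singleton]
    constructor
    · rintro ⟨-, -, h⟩; exact h
    · rintro rfl
      exact ⟨hmem, h1n, rfl⟩
  rw [this, Finset.card_singleton]


theorem stmt17 :
    a 0 = 1 ∧ a 1 = 1 ∧
    ∀ n : ℕ, 2 ≤ n →
      a n = a (n - 1) + 1 +
        ∑ k ∈ Finset.Icc 1 (n - 2), Nat.choose (n - 2) k * a (n - k - 2) := by
  classical
  refine ⟨a_zero, a_one, ?_⟩
  intro n hn
  rw [a_eq]
  rw [← Finset.card_filter_add_card_filter_not
    (s := AP (Finset.Icc 1 n)) (p := fun P => ({1} : Finset ℕ) ∈ P)]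
  have hsplit2 : ((AP (Finset.Icc 1 n)).filter (fun P => ¬ (({1} : Finset ℕ) ∈ P))).card
      = 1 + ∑ k ∈ Finset.Icc 1 (n - 2), Nat.choose (n - 2) k * a (n - k - 2) := by
    rw [← Finset.card_filter_add_card_filter_not
      (s := (AP (Finset.Icc 1 n)).filter (fun P => ¬ (({1} : Finset ℕ) ∈ P)))
      (p := fun P => P = {Finset.Icc 1 n})]
    congr 1
    · rw [Finset.filter_filter]
      have := part2_card n hn
      convert this using 2
    · rw [Finset.filter_filter]
      have := part3_card n hn
      convert this using 2
  rw [hsplit2, card_filter_one n hn, AP_card]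
  rw [Nat.card_Icc, show n + 1 - 2 = n - 1 by omega]
  omega
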